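/- Let $n_1, m_2, m_3$ be integers $\ge 2$, let $h = \gcd(1-2n_1,\ 1-2m_2,\ 1-2m_3)$, and consider the $3\times 3$ integer matrix $\partial_2 = \begin{bmatrix} -(1-2m_2) & -(1-2m_3) & 0 \\ 1-2n_1 & 0 & -(1-2m_3) \\ 0 & 1-2n_1 & 1-2m_2 \end{bmatrix}$. Then $\det \partial_2 = 0$, the gcd of the entries of $\partial_2$ is $h$, and the gcd of all $2\times 2$ minors of $\partial_2$ is $h^2$. -/

import Mathlib

open Finset in
theorem stmt_14 (n₁ m₂ m₃ : ℤ) (h₁ : 2 ≤ n₁) (h₂ : 2 ≤ m₂) (h₃ : 2 ≤ m₃)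
    (h : ℕ) (hh : h = Int.gcd (1 - 2*n₁) (Int.gcd (1 - 2*m₂) (1 - 2*m₃)))
    (M : Matrix (Fin 3) (Fin 3) ℤ)
    (hM : M = !![-(1-2*m₂), -(1-2*m₃), 0;
                 1-2*n₁, 0, -(1-2*m₃);
                 0, 1-2*n₁, 1-2*m₂]) :
    M.det = 0 ∧
    Finset.univ.gcd (fun p : Fin 3 × Fin 3 => M p.1 p.2) = (h : ℤ) ∧
    Finset.univ.gcd (fun q : (Fin 3 × Fin 3) × (Fin 3 × Fin 3) =>
      M q.1.1 q.2.1 * M q.1.2 q.2.2 - M q.1.1 q.2.2 * M q.1.2 q.2.1) = ((h : ℤ))^2 := by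
  set a : ℤ := 1 - 2*n₁ with ha'
  set b : ℤ := 1 - 2*m₂ with hb'
  set c : ℤ := 1 - 2*m₃ with hc'
  have ha : (h:ℤ) ∣ a := by rw [hh]; exact Int.gcd_dvd_left _ _
  have hbc : (h:ℤ) ∣ (Int.gcd b c : ℤ) := by rw [hh]; exact Int.gcd_dvd_right _ _
  have hb : (h:ℤ) ∣ b := hbc.trans (Int.gcd_dvd_left _ _)
  have hc : (h:ℤ) ∣ c := hbc.trans (Int.gcd_dvd_right _ _)
  -- Bezout
  obtain ⟨X, Y, Z, hbez⟩ : ∃ X Y Z : ℤ, (h:ℤ) = a*X + b*Y + c*Z := by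
    refine ⟨Int.gcdA a (Int.gcd b c), (Int.gcdB a (Int.gcd b c)) * Int.gcdA b c,
      (Int.gcdB a (Int.gcd b c)) * Int.gcdB b c, ?_⟩
    have e1 := Int.gcd_eq_gcd_ab a (Int.gcd b c)
    have e2 := Int.gcd_eq_gcd_ab b c
    rw [hh, e1, show ((Int.gcd b c : ℤ)) = b * Int.gcdA b c + c * Int.gcdB b c from e2]
    ring
  have hnn : ∀ (α : Type) [DecidableEq α] (s : Finset α) (f : α → ℤ), 0 ≤ s.gcd f := by
    intro α _ s f
    have := Finset.normalize_gcd (s := s) (f := f)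
    rw [← Int.abs_eq_normalize] at this
    rw [← this]; exact abs_nonneg _
  have hent : ∀ i j : Fin 3, (h:ℤ) ∣ M i j := by
    intro i j
    fin_cases i <;> fin_cases j <;> simp [hM, dvd_neg] <;>
      first | exact ha | exact hb | exact hc
  set f₁ : Fin 3 × Fin 3 → ℤ := fun p => M p.1 p.2 with hf₁
  set f₂ : (Fin 3 × Fin 3) × (Fin 3 × Fin 3) → ℤ := fun q =>
    M q.1.1 q.2.1 * M q.1.2 q.2.2 - M q.1.1 q.2.2 * M q.1.2 q.2.1 with hf₂
  refine ⟨?_, ?_, ?_⟩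
  · simp [hM, Matrix.det_fin_three]; ring
  · refine Int.dvd_antisymm (hnn _ _ _) (Int.natCast_nonneg h) ?_ ?_
    · have d1 : Finset.univ.gcd f₁ ∣ a := by
        simpa [hf₁, hM] using Finset.gcd_dvd (f := f₁) (Finset.mem_univ ((1,0) : Fin 3 × Fin 3))
      have d2 : Finset.univ.gcd f₁ ∣ b := by
        simpa [hf₁, hM] using Finset.gcd_dvd (f := f₁) (Finset.mem_univ ((2,2) : Fin 3 × Fin 3))
      have d3 : Finset.univ.gcd f₁ ∣ c := by
        simpa [hf₁, hM, dvd_neg] using Finset.gcd_dvd (f := f₁) (Finset.mem_univ ((0,1) : Fin 3 × Fin 3))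
      rw [hbez]
      exact dvd_add (dvd_add (d1.mul_right X) (d2.mul_right Y)) (d3.mul_right Z)
    · refine Finset.dvd_gcd fun p _ => ?_
      exact hent p.1 p.2
  · refine Int.dvd_antisymm (hnn _ _ _) (by positivity) ?_ ?_
    · have haa : Finset.univ.gcd f₂ ∣ a*a := by
        have := Finset.gcd_dvd (f := f₂) (Finset.mem_univ (((1,2),(0,1)) : (Fin 3 × Fin 3) × (Fin 3 × Fin 3)))
        simp only [hf₂, hM] at this ⊢
        simpa [Matrix.cons_val_zero, Matrix.cons_val_one, Matrix.head_cons,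
          Matrix.cons_val_two, Matrix.tail_cons] using this
      have hbb' : Finset.univ.gcd f₂ ∣ b*b := by
        have := Finset.gcd_dvd (f := f₂) (Finset.mem_univ (((0,2),(0,2)) : (Fin 3 × Fin 3) × (Fin 3 × Fin 3)))
        simp only [hf₂, hM] at this ⊢
        simpa [Matrix.cons_val_zero, Matrix.cons_val_one, Matrix.head_cons,
          Matrix.cons_val_two, Matrix.tail_cons, show (-b)*b - 0*0 = -(b*b) by ring] using this
      have hcc : Finset.univ.gcd f₂ ∣ c*c := by
        have := Finset.gcd_dvd (f := f₂) (Finset.mem_univ (((0,1),(1,2)) : (Fin 3 × Fin 3) × (Fin 3 × Fin 3)))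
        simp only [hf₂, hM] at this ⊢
        simpa [Matrix.cons_val_zero, Matrix.cons_val_one, Matrix.head_cons,
          Matrix.cons_val_two, Matrix.tail_cons, show (-c)*(-c) - 0*0 = c*c by ring] using this
      have hab : Finset.univ.gcd f₂ ∣ a*b := by
        have := Finset.gcd_dvd (f := f₂) (Finset.mem_univ (((1,2),(0,2)) : (Fin 3 × Fin 3) × (Fin 3 × Fin 3)))
        simp only [hf₂, hM] at this ⊢
        simpa [Matrix.cons_val_zero, Matrix.cons_val_one, Matrix.head_cons,
          Matrix.cons_val_two, Matrix.tail_cons] using this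
      have hac : Finset.univ.gcd f₂ ∣ a*c := by
        have := Finset.gcd_dvd (f := f₂) (Finset.mem_univ (((1,0),(0,1)) : (Fin 3 × Fin 3) × (Fin 3 × Fin 3)))
        simp only [hf₂, hM] at this ⊢
        simpa [Matrix.cons_val_zero, Matrix.cons_val_one, Matrix.head_cons,
          Matrix.cons_val_two, Matrix.tail_cons, show a*(-c) - 0*(-b) = -(a*c) by ring] using this
      have hbc' : Finset.univ.gcd f₂ ∣ b*c := by
        have := Finset.gcd_dvd (f := f₂) (Finset.mem_univ (((0,1),(0,2)) : (Fin 3 × Fin 3) × (Fin 3 × Fin 3)))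
        simp only [hf₂, hM] at this ⊢
        simpa [Matrix.cons_val_zero, Matrix.cons_val_one, Matrix.head_cons,
          Matrix.cons_val_two, Matrix.tail_cons, show (-b)*(-c) - (-c)*0 = b*c by ring] using this
      have e : ((h:ℤ))^2 = (a*a)*(X*X) + (a*b)*(2*X*Y) + (a*c)*(2*X*Z)
          + (b*b)*(Y*Y) + (b*c)*(2*Y*Z) + (c*c)*(Z*Z) := by rw [hbez]; ring
      rw [e]
      exact dvd_add (dvd_add (dvd_add (dvd_add (dvd_add (haa.mul_right _) (hab.mul_right _))
        (hac.mul_right _)) (hbb'.mul_right _)) (hbc'.mul_right _)) (hcc.mul_right _)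
    · refine Finset.dvd_gcd fun q _ => ?_
      rw [hf₂, sq]
      exact dvd_sub (mul_dvd_mul (hent _ _) (hent _ _)) (mul_dvd_mul (hent _ _) (hent _ _))
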